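/- arXiv:1910.04201 — 4 statements merged into one kernel-verified Lean document; each statement's English description precedes it below -/
import Mathlib

section
/- Smolyak's lemma in dimension 2: there is a constant C depending only on c and α such that for every (c,α)-mixed Hölder function f : [0,1]^2 → ℝ, every x ∈ [0,1)^2 and every m ≥ 1, |f(x) - ∑_{i+j=m} f_{(i,j)} + ∑_{i+j=m-1} f_{(i,j)}| ≤ C 2^{-αm} m, where f_{(i,j)} is the value of f at the center of the dyadic box of dimensions 2^{-i} × 2^{-j} containing x, and the sums range over nonnegative integers i,j. -/
/-- The center of the dyadic interval of length `2^{-i}` containing `x ∈ [0,1)`. -/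
noncomputable def ctr (i : ℕ) (x : ℝ) : ℝ := ((⌊(2:ℝ) ^ i * x⌋ : ℝ) + 1 / 2) / 2 ^ i

lemma ctr_dist (i : ℕ) (x : ℝ) : |x - ctr i x| ≤ (1/2 : ℝ) ^ (i+1) := by
  have h2 : (0:ℝ) < 2 ^ i := by positivity
  have h0 : ((⌊(2:ℝ)^i * x⌋ : ℝ)) ≤ 2^i * x := Int.floor_le _
  have h1 : 2^i * x < ((⌊(2:ℝ)^i * x⌋ : ℝ)) + 1 := Int.lt_floor_add_one _
  have heq : x - ctr i x = (2^i * x - (⌊(2:ℝ)^i * x⌋ : ℝ) - 1/2) / 2^i := by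
    rw [ctr, eq_div_iff h2.ne', sub_mul, div_mul_cancel₀ _ h2.ne']; ring
  rw [heq, abs_div, abs_of_pos h2, div_le_iff₀ h2]
  have habs : |2^i * x - ((⌊(2:ℝ)^i * x⌋ : ℝ)) - 1/2| ≤ 1/2 := by
    rw [abs_le]; constructor <;> linarith
  have : (1/2 : ℝ) ^ (i+1) * 2 ^ i = 1/2 := by
    calc (1/2 : ℝ) ^ (i+1) * 2 ^ i = (2 * (1/2) : ℝ) ^ i * (1/2) := by
          rw [mul_pow, pow_succ]; ring
    _ = 1/2 := by norm_num
  linarith [this]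

lemma ctr_mem (i : ℕ) {x : ℝ} (hx : x ∈ Set.Ico (0:ℝ) 1) : ctr i x ∈ Set.Icc (0:ℝ) 1 := by
  obtain ⟨hx0, hx1⟩ := hx
  have h2 : (0:ℝ) < 2 ^ i := by positivity
  have hge : (0:ℤ) ≤ ⌊(2:ℝ)^i * x⌋ := Int.floor_nonneg.mpr (by positivity)
  have hlt : ((⌊(2:ℝ)^i * x⌋ : ℝ)) < 2^i := by
    calc ((⌊(2:ℝ)^i * x⌋ : ℝ)) ≤ 2^i * x := Int.floor_le _
    _ < 2^i * 1 := by nlinarith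
    _ = 2^i := by ring
  have hle : ((⌊(2:ℝ)^i * x⌋ : ℝ)) + 1 ≤ 2^i := by
    have : (⌊(2:ℝ)^i * x⌋ : ℝ) < ((2:ℤ)^i : ℝ) := by push_cast; exact hlt
    have := Int.lt_iff_add_one_le.mp (by exact_mod_cast this)
    calc ((⌊(2:ℝ)^i * x⌋ : ℝ)) + 1 = ((⌊(2:ℝ)^i * x⌋ + 1 : ℤ) : ℝ) := by push_cast; ring
    _ ≤ (((2:ℤ)^i : ℤ) : ℝ) := by exact_mod_cast this
    _ = 2^i := by push_cast; ring
  constructor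
  · apply div_nonneg _ h2.le
    have : (0:ℝ) ≤ (⌊(2:ℝ)^i * x⌋ : ℝ) := by exact_mod_cast hge
    linarith
  · rw [ctr, div_le_one h2]; linarith

/-- Smolyak's lemma in dimension 2: there is `C = C(c,α)` such that for every
`(c,α)`-mixed Hölder `f : [0,1]^2 → ℝ`, every `(x,y) ∈ [0,1)^2` and `m ≥ 1`,
`|f(x,y) - ∑_{i+j=m} f_{(i,j)} + ∑_{i+j=m-1} f_{(i,j)}| ≤ C 2^{-αm} m`,
where `f_{(i,j)}` is `f` at the center of the dyadic box of dimensions `2^{-i} × 2^{-j}`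
containing `(x,y)`. -/
theorem stmt7 (c α : ℝ) (hc : 0 < c) (hα : 0 < α) (hα1 : α ≤ 1) :
    ∃ C : ℝ, 0 < C ∧ ∀ f : ℝ → ℝ → ℝ,
      (∀ x ∈ Set.Icc (0:ℝ) 1, ∀ x' ∈ Set.Icc (0:ℝ) 1, ∀ y ∈ Set.Icc (0:ℝ) 1,
        |f x' y - f x y| ≤ c * |x' - x| ^ α) →
      (∀ x ∈ Set.Icc (0:ℝ) 1, ∀ y ∈ Set.Icc (0:ℝ) 1, ∀ y' ∈ Set.Icc (0:ℝ) 1,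
        |f x y' - f x y| ≤ c * |y' - y| ^ α) →
      (∀ x ∈ Set.Icc (0:ℝ) 1, ∀ x' ∈ Set.Icc (0:ℝ) 1, ∀ y ∈ Set.Icc (0:ℝ) 1,
        ∀ y' ∈ Set.Icc (0:ℝ) 1,
        |f x' y' - f x' y - f x y' + f x y| ≤ c * (|x' - x| * |y' - y|) ^ α) →
      ∀ x ∈ Set.Ico (0:ℝ) 1, ∀ y ∈ Set.Ico (0:ℝ) 1, ∀ m : ℕ, 1 ≤ m →
        |f x y - (∑ i ∈ Finset.range (m + 1), f (ctr i x) (ctr (m - i) y))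
            + ∑ i ∈ Finset.range m, f (ctr i x) (ctr (m - 1 - i) y)|
          ≤ C * ((1/2 : ℝ) ^ m) ^ α * m := by
  refine ⟨3*c, by positivity, ?_⟩
  intro f h1 h2 h3 x hx y hy m hm
  have hxI : x ∈ Set.Icc (0:ℝ) 1 := ⟨hx.1, hx.2.le⟩
  have hyI : y ∈ Set.Icc (0:ℝ) 1 := ⟨hy.1, hy.2.le⟩
  set δ : ℝ := ((1/2:ℝ)^m)^α with hδdef
  have hδpos : 0 < δ := Real.rpow_pos_of_pos (by positivity) α
  have mono : ∀ t s : ℝ, 0 ≤ t → t ≤ s → t ^ α ≤ s ^ α :=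
    fun t s h h' => Real.rpow_le_rpow h h' hα.le
  have hhalfpos : ∀ n : ℕ, (0:ℝ) < (1/2)^n := fun n => by positivity
  have hsucc : ∀ n : ℕ, ((1/2:ℝ))^(n+1) ≤ (1/2)^n := fun n => by
    rw [pow_succ]; nlinarith [hhalfpos n]
  -- edge bounds
  have hA : |f x y - f (ctr m x) y| ≤ c * δ := by
    have h := h1 x hxI (ctr m x) (ctr_mem m hx) y hyI
    rw [abs_sub_comm]
    refine h.trans (mul_le_mul_of_nonneg_left (mono _ _ (abs_nonneg _) ?_) hc.le)
    rw [abs_sub_comm]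
    exact (ctr_dist m x).trans (hsucc m)
  have hB : |f (ctr 0 x) y - f (ctr 0 x) (ctr m y)| ≤ c * δ := by
    have h := h2 (ctr 0 x) (ctr_mem 0 hx) (ctr m y) (ctr_mem m hy) y hyI
    refine h.trans (mul_le_mul_of_nonneg_left (mono _ _ (abs_nonneg _) ?_) hc.le)
    exact (ctr_dist m y).trans (hsucc m)
  -- mixed difference bounds
  have hM : ∀ k ∈ Finset.range m,
      |f (ctr (k+1) x) y - f (ctr (k+1) x) (ctr (m-1-k) y)
        - f (ctr k x) y + f (ctr k x) (ctr (m-1-k) y)| ≤ c * δ := by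
    intro k hk
    have hkm : k < m := Finset.mem_range.mp hk
    have h := h3 (ctr k x) (ctr_mem k hx) (ctr (k+1) x) (ctr_mem (k+1) hx)
      (ctr (m-1-k) y) (ctr_mem (m-1-k) hy) y hyI
    refine h.trans (mul_le_mul_of_nonneg_left (mono _ _ (by positivity) ?_) hc.le)
    have hx1 : |ctr (k+1) x - ctr k x| ≤ (1/2:ℝ)^k := by
      calc |ctr (k+1) x - ctr k x| ≤ |ctr (k+1) x - x| + |x - ctr k x| := abs_sub_le _ _ _
      _ ≤ (1/2:ℝ)^(k+2) + (1/2)^(k+1) := by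
          gcongr
          · rw [abs_sub_comm]; exact ctr_dist (k+1) x
          · exact ctr_dist k x
      _ ≤ (1/2:ℝ)^k := by
          have e1 : (1/2:ℝ)^(k+1) = (1/2)^k * (1/2) := pow_succ _ _
          have e2 : (1/2:ℝ)^(k+2) = (1/2)^k * (1/2) * (1/2) := by
            rw [pow_succ, pow_succ]
          nlinarith [hhalfpos k]
    have hy1 : |y - ctr (m-1-k) y| ≤ (1/2:ℝ)^(m-k) := by
      have h := ctr_dist (m-1-k) y
      have he : m-1-k+1 = m-k := by omega
      rwa [he] at h
    calc |ctr (k+1) x - ctr k x| * |y - ctr (m-1-k) y|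
        ≤ (1/2:ℝ)^k * (1/2)^(m-k) := by
          exact mul_le_mul hx1 hy1 (abs_nonneg _) (by positivity)
    _ = (1/2:ℝ)^m := by rw [← pow_add]; congr 1; omega
  -- the telescoping identity
  have key : f x y - (∑ i ∈ Finset.range (m + 1), f (ctr i x) (ctr (m - i) y))
        + ∑ i ∈ Finset.range m, f (ctr i x) (ctr (m - 1 - i) y)
      = (f x y - f (ctr m x) y) + (f (ctr 0 x) y - f (ctr 0 x) (ctr m y))
        + ∑ k ∈ Finset.range m, (f (ctr (k+1) x) y - f (ctr (k+1) x) (ctr (m-1-k) y)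
            - f (ctr k x) y + f (ctr k x) (ctr (m-1-k) y)) := by
    have hs1 : ∑ i ∈ Finset.range (m+1), f (ctr i x) (ctr (m-i) y)
        = (∑ k ∈ Finset.range m, f (ctr (k+1) x) (ctr (m-1-k) y)) + f (ctr 0 x) (ctr m y) := by
      rw [Finset.sum_range_succ']
      congr 1
      apply Finset.sum_congr rfl; intro k _
      congr 2
      omega
    have hs2 : ∑ k ∈ Finset.range m, (f (ctr (k+1) x) y - f (ctr k x) y)
        = f (ctr m x) y - f (ctr 0 x) y :=
      Finset.sum_range_sub (fun k => f (ctr k x) y) m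
    have hs3 : ∑ k ∈ Finset.range m, (f (ctr (k+1) x) y - f (ctr (k+1) x) (ctr (m-1-k) y)
            - f (ctr k x) y + f (ctr k x) (ctr (m-1-k) y))
        = (∑ k ∈ Finset.range m, (f (ctr (k+1) x) y - f (ctr k x) y))
          + ((∑ k ∈ Finset.range m, f (ctr k x) (ctr (m-1-k) y))
            - ∑ k ∈ Finset.range m, f (ctr (k+1) x) (ctr (m-1-k) y)) := by
      rw [← Finset.sum_sub_distrib, ← Finset.sum_add_distrib]
      apply Finset.sum_congr rfl; intro k _; ring
    rw [hs1, hs3, hs2]; ring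
  rw [key]
  have habs : |(f x y - f (ctr m x) y) + (f (ctr 0 x) y - f (ctr 0 x) (ctr m y))
      + ∑ k ∈ Finset.range m, (f (ctr (k+1) x) y - f (ctr (k+1) x) (ctr (m-1-k) y)
          - f (ctr k x) y + f (ctr k x) (ctr (m-1-k) y))|
      ≤ c * δ + c * δ + m * (c * δ) := by
    refine (abs_add_le _ _).trans ?_
    have hsum : |∑ k ∈ Finset.range m, (f (ctr (k+1) x) y - f (ctr (k+1) x) (ctr (m-1-k) y)
        - f (ctr k x) y + f (ctr k x) (ctr (m-1-k) y))| ≤ m * (c * δ) := by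
      refine (Finset.abs_sum_le_sum_abs _ _).trans ?_
      calc ∑ k ∈ Finset.range m, |f (ctr (k+1) x) y - f (ctr (k+1) x) (ctr (m-1-k) y)
          - f (ctr k x) y + f (ctr k x) (ctr (m-1-k) y)|
          ≤ ∑ _k ∈ Finset.range m, c * δ := Finset.sum_le_sum hM
      _ = m * (c * δ) := by rw [Finset.sum_const, Finset.card_range, nsmul_eq_mul]
    have := (abs_add_le (f x y - f (ctr m x) y) (f (ctr 0 x) y - f (ctr 0 x) (ctr m y)))
    linarith
  refine habs.trans ?_
  have hm1 : (1:ℝ) ≤ (m:ℝ) := by exact_mod_cast hm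
  nlinarith [mul_pos hc hδpos]
end

section
/- Noisy randomized Kaczmarz error accumulation: let Ψ : Ω → ℝ^p with Ψ(ω) ≠ 0 for all ω, let e_0 = 0, and for a sequence ω_1, ω_2, ... in Ω and scalars ε_1, ε_2, ... define e_n = e_{n-1} + ((ε_n - ⟨Ψ(ω_n), e_{n-1}⟩)/||Ψ(ω_n)||_2^2) Ψ(ω_n). Then for every n, ||e_n||_2^2 ≤ ∑_{j=1}^n ε_j^2 / ||Ψ(ω_j)||_2^2. -/
/-- Noisy randomized Kaczmarz error accumulation: with `e_0 = 0` and
`e_n = e_{n-1} + ((ε_n - ⟨Ψ(ω_n), e_{n-1}⟩)/‖Ψ(ω_n)‖²) Ψ(ω_n)`, one has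
`‖e_n‖² ≤ ∑_{j=1}^n ε_j² / ‖Ψ(ω_j)‖²`. -/
theorem stmt17 (p : ℕ) (Ω : Type*) (Ψ : Ω → EuclideanSpace ℝ (Fin p))
    (hΨ : ∀ ω, Ψ ω ≠ 0) (ω : ℕ → Ω) (ε : ℕ → ℝ)
    (e : ℕ → EuclideanSpace ℝ (Fin p)) (he0 : e 0 = 0)
    (he : ∀ n : ℕ, e (n + 1) = e n
      + (((ε (n + 1) - (inner ℝ (Ψ (ω (n + 1))) (e n) : ℝ)) / ‖Ψ (ω (n + 1))‖ ^ 2)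
          • Ψ (ω (n + 1)))) :
    ∀ n : ℕ, ‖e n‖ ^ 2 ≤ ∑ j ∈ Finset.Icc 1 n, ε j ^ 2 / ‖Ψ (ω j)‖ ^ 2 := by
  intro n
  induction n with
  | zero => simp [he0]
  | succ n ih =>
    rw [Finset.sum_Icc_succ_top (by omega : 1 ≤ n + 1)]
    set ψ := Ψ (ω (n + 1)) with hψdef
    have hψ : ‖ψ‖ ≠ 0 := norm_ne_zero_iff.mpr (hΨ _)
    have hψ2 : (0:ℝ) < ‖ψ‖ ^ 2 := by positivity
    set a : ℝ := inner ℝ ψ (e n) with ha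
    set c : ℝ := (ε (n + 1) - a) / ‖ψ‖ ^ 2 with hc
    have key : ‖e (n + 1)‖ ^ 2 = ‖e n‖ ^ 2 + 2 * (c * a) + c ^ 2 * ‖ψ‖ ^ 2 := by
      rw [he n, ← hψdef, ← ha, ← hc, norm_add_sq_real, real_inner_smul_right,
        real_inner_comm, ← ha, norm_smul, mul_pow, Real.norm_eq_abs, sq_abs]
    have hle : 2 * (c * a) + c ^ 2 * ‖ψ‖ ^ 2 ≤ ε (n + 1) ^ 2 / ‖ψ‖ ^ 2 := by
      rw [le_div_iff₀ hψ2]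
      have hc2 : c * ‖ψ‖ ^ 2 = ε (n + 1) - a := by
        rw [hc]; field_simp
      calc (2 * (c * a) + c ^ 2 * ‖ψ‖ ^ 2) * ‖ψ‖ ^ 2
          = 2 * a * (c * ‖ψ‖ ^ 2) + (c * ‖ψ‖ ^ 2) ^ 2 := by ring
        _ = ε (n + 1) ^ 2 - a ^ 2 := by rw [hc2]; ring
        _ ≤ ε (n + 1) ^ 2 := by nlinarith [sq_nonneg a]
    calc ‖e (n + 1)‖ ^ 2 = ‖e n‖ ^ 2 + (2 * (c * a) + c ^ 2 * ‖ψ‖ ^ 2) := by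
          rw [key]; ring
      _ ≤ _ := add_le_add ih hle
end

section
/- Single-step randomized Kaczmarz contraction: let A be an N × p real matrix (N ≥ p) of rank p whose rows a_1,...,a_N all have the same Euclidean norm, let Aw = b be a consistent system, let I be uniformly random in {1,...,N}, and for any w_0 ∈ ℝ^p set w_1 = w_0 + ((b_I - ⟨a_I, w_0⟩)/||a_I||_2^2) a_I. Then E||w_1 - w||_2^2 ≤ (1 - σ_p^2/∑_{j=1}^p σ_j^2) ||w_0 - w||_2^2, where σ_1 ≥ ... ≥ σ_p > 0 are the singular values of A. -/
open Finset

/-- Single-step randomized Kaczmarz contraction: for an `N × p` matrix `A` of rank `p`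
whose rows all have Euclidean norm `√ρ`, a consistent system `A w = b`, and a uniformly
random row index, the expected squared error after one Kaczmarz step contracts by the
factor `1 - σ_p²/∑_j σ_j²`.  Here `σmin` is any lower bound for the squared smallest
singular value (i.e. `σmin ‖v‖² ≤ ‖Av‖²` for all `v`, with equality attainable at
`σmin = σ_p²`), and `∑_j σ_j² = ‖A‖_F² = ∑_{i,j} A_{ij}²`.  The expectation over the
uniformly random row index is written as the average over `i`. -/
theorem stmt18 (N p : ℕ) (hp : 0 < p) (hN : p ≤ N)
    (A : Matrix (Fin N) (Fin p) ℝ) (hrank : A.rank = p)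
    (ρ : ℝ) (hρ : 0 < ρ) (hrow : ∀ i, ∑ j, A i j ^ 2 = ρ)
    (w w₀ : Fin p → ℝ) (b : Fin N → ℝ) (hb : A.mulVec w = b)
    (σmin : ℝ) (hσmin : 0 < σmin)
    (hσ : ∀ v : Fin p → ℝ, σmin * ∑ j, v j ^ 2 ≤ ∑ i, (A.mulVec v i) ^ 2) :
    (1 / N : ℝ) * ∑ i : Fin N,
        ∑ j, ((w₀ j + ((b i - ∑ j', A i j' * w₀ j') / ρ) * A i j) - w j) ^ 2
      ≤ (1 - σmin / ∑ i, ∑ j, A i j ^ 2) * ∑ j, (w₀ j - w j) ^ 2 := by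
  have hN0 : (0:ℝ) < N := by exact_mod_cast lt_of_lt_of_le hp hN
  set e : Fin p → ℝ := fun j => w₀ j - w j with he
  set s : Fin N → ℝ := fun i => ∑ j, A i j * e j with hs
  set E : ℝ := ∑ j, e j ^ 2 with hE
  have hbi : ∀ i, b i - ∑ j', A i j' * w₀ j' = - s i := by
    intro i
    have hb' : b i = ∑ j', A i j' * w j' := by
      rw [← hb]; simp [Matrix.mulVec, dotProduct]
    simp only [hb', hs, he, mul_sub, Finset.sum_sub_distrib]
    ring
  have key : ∀ i, (∑ j, ((w₀ j + ((b i - ∑ j', A i j' * w₀ j') / ρ) * A i j) - w j) ^ 2)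
      = E - s i ^ 2 / ρ := by
    intro i
    rw [hbi i]
    have expand : ∀ j, ((w₀ j + (- s i / ρ) * A i j) - w j) ^ 2
        = e j ^ 2 - (2 * (s i / ρ)) * (A i j * e j) + (s i / ρ) ^ 2 * (A i j ^ 2) := by
      intro j; simp only [he]; ring
    calc (∑ j, ((w₀ j + (- s i / ρ) * A i j) - w j) ^ 2)
        = ∑ j, (e j ^ 2 - (2 * (s i / ρ)) * (A i j * e j) + (s i / ρ) ^ 2 * (A i j ^ 2)) := by
          exact Finset.sum_congr rfl fun j _ => expand j
      _ = E - (2 * (s i / ρ)) * s i + (s i / ρ) ^ 2 * ρ := by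
          rw [Finset.sum_add_distrib, Finset.sum_sub_distrib, ← Finset.mul_sum,
            ← Finset.mul_sum, hrow i]
      _ = E - s i ^ 2 / ρ := by field_simp; ring
  have hsum : (∑ i : Fin N, ∑ j, ((w₀ j + ((b i - ∑ j', A i j' * w₀ j') / ρ) * A i j) - w j) ^ 2)
      = N * E - (∑ i, s i ^ 2) / ρ := by
    rw [Finset.sum_congr rfl fun i _ => key i, Finset.sum_sub_distrib]
    simp [Finset.sum_div]
  have hfro : (∑ i : Fin N, ∑ j, A i j ^ 2) = N * ρ := by
    simp [hrow]
  have hσe : σmin * E ≤ ∑ i, s i ^ 2 := by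
    have := hσ e
    simpa [Matrix.mulVec, dotProduct, hs, hE] using this
  rw [hsum, hfro]
  have hE0 : 0 ≤ E := Finset.sum_nonneg fun j _ => sq_nonneg _
  have hNρ : (0:ℝ) < N * ρ := by positivity
  have h1 : (1 / N : ℝ) * (N * E - (∑ i, s i ^ 2) / ρ) = E - (∑ i, s i ^ 2) / (N * ρ) := by
    field_simp
  have h2 : (1 - σmin / (N * ρ)) * E = E - σmin * E / (N * ρ) := by ring
  rw [h1, h2]
  have h3 : σmin * E / (N * ρ) ≤ (∑ i, s i ^ 2) / (N * ρ) :=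
    (div_le_div_iff_of_pos_right hNρ).mpr hσe
  linarith
end

section
/- If all singular values of an N × p matrix A are equal to σ > 0 (i.e., A^T A = σ^2 I_p), its rows all have equal norm, and Aw = b is consistent, then the randomized Kaczmarz iteration with independent uniform row indices satisfies E||w_n - w||_2^2 ≤ (1 - 1/p)^n ||w_0 - w||_2^2 for all n ≥ 0. -/
open Finset

/-- One step of the Kaczmarz iteration using row `i` of `A`. -/
noncomputable def kacStep (N p : ℕ) (A : Matrix (Fin N) (Fin p) ℝ) (b : Fin N → ℝ)
    (i : Fin N) (v : Fin p → ℝ) : Fin p → ℝ :=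
  fun j => v j + ((b i - ∑ j', A i j' * v j') / ∑ j', A i j' ^ 2) * A i j

/-- The Kaczmarz iterate after applying the steps for the row indices
`seq 0, seq 1, …, seq (n-1)` in order, starting from `w₀`. -/
noncomputable def kacIter (N p n : ℕ) (A : Matrix (Fin N) (Fin p) ℝ) (b : Fin N → ℝ)
    (w₀ : Fin p → ℝ) (seq : Fin n → Fin N) : Fin p → ℝ :=
  (List.ofFn seq).foldl (fun v i => kacStep N p A b i v) w₀

lemma kac_step_sum (N p : ℕ) (hp : 0 < p) (hN : 0 < N)
    (A : Matrix (Fin N) (Fin p) ℝ) (σ : ℝ) (hσ : 0 < σ)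
    (hATA : A.transpose * A = (σ ^ 2) • (1 : Matrix (Fin p) (Fin p) ℝ))
    (hrow : ∀ i i' : Fin N, ∑ j, A i j ^ 2 = ∑ j, A i' j ^ 2)
    (w : Fin p → ℝ) (b : Fin N → ℝ) (hb : A.mulVec w = b) (v : Fin p → ℝ) :
    ∑ i, ∑ j, (kacStep N p A b i v j - w j) ^ 2
      = (N : ℝ) * ((1 - 1 / (p : ℝ)) * ∑ j, (v j - w j) ^ 2) := by
  have hpR : (0:ℝ) < p := by exact_mod_cast hp
  have hNR : (0:ℝ) < N := by exact_mod_cast hN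
  have horth : ∀ j j' : Fin p, ∑ i, A i j * A i j' = if j = j' then σ ^ 2 else 0 := by
    intro j j'
    have h := congrFun (congrFun hATA j) j'
    simpa [Matrix.mul_apply, Matrix.transpose_apply, Matrix.one_apply, Matrix.smul_apply,
      mul_ite, mul_one, mul_zero] using h
  set c : ℝ := (p : ℝ) * σ ^ 2 / N with hc_def
  have hc0 : 0 < c := by positivity
  have htr : ∑ i, ∑ j, A i j ^ 2 = (p : ℝ) * σ ^ 2 := by
    rw [Finset.sum_comm]
    have : ∀ j : Fin p, ∑ i, A i j ^ 2 = σ ^ 2 := by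
      intro j
      have := horth j j
      simpa [sq] using this
    simp [this, Finset.sum_const, mul_comm]
  have hc : ∀ i, ∑ j, A i j ^ 2 = c := by
    intro i
    have h1 : ∑ i' : Fin N, ∑ j, A i' j ^ 2 = (N : ℝ) * ∑ j, A i j ^ 2 := by
      rw [Finset.sum_congr rfl fun i' _ => hrow i' i]
      simp [Finset.sum_const, mul_comm]
    rw [htr] at h1
    field_simp [hc_def]
    rw [hc_def]; field_simp; linarith [h1]
  set e : Fin p → ℝ := fun j => v j - w j with he
  set t : Fin N → ℝ := fun i => ∑ j, A i j * e j with ht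
  have hbi : ∀ i, b i = ∑ j, A i j * w j := by
    intro i; rw [← hb]; simp [Matrix.mulVec, dotProduct]
  have hstep : ∀ i j, kacStep N p A b i v j - w j = e j - (t i / c) * A i j := by
    intro i j
    have ht' : t i = (∑ j', A i j' * v j') - ∑ j', A i j' * w j' := by
      simp [ht, he, mul_sub, Finset.sum_sub_distrib]
    simp only [kacStep, hbi i, hc i]
    rw [ht']
    ring
  have hsq : ∀ i, ∑ j, (e j - (t i / c) * A i j) ^ 2 = (∑ j, e j ^ 2) - (t i) ^ 2 / c := by
    intro i
    have expand : ∀ j, (e j - (t i / c) * A i j) ^ 2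
        = e j ^ 2 - (2 * (t i / c)) * (A i j * e j) + (t i / c) ^ 2 * A i j ^ 2 := by
      intro j; ring
    rw [Finset.sum_congr rfl fun j _ => expand j, Finset.sum_add_distrib,
      Finset.sum_sub_distrib, ← Finset.mul_sum, ← Finset.mul_sum]
    have h1 : ∑ j, A i j * e j = t i := rfl
    rw [h1, hc i]
    field_simp
    ring
  have hts : ∑ i, (t i) ^ 2 = σ ^ 2 * ∑ j, e j ^ 2 := by
    calc ∑ i, (t i) ^ 2
        = ∑ i, ∑ j, ∑ j', (A i j * A i j') * (e j * e j') := by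
          refine Finset.sum_congr rfl fun i _ => ?_
          rw [sq, ht, Finset.sum_mul_sum]
          exact Finset.sum_congr rfl fun j _ => Finset.sum_congr rfl fun j' _ => by ring
      _ = ∑ j, ∑ j', (∑ i, A i j * A i j') * (e j * e j') := by
          rw [Finset.sum_comm]
          refine Finset.sum_congr rfl fun j _ => ?_
          rw [Finset.sum_comm]
          exact Finset.sum_congr rfl fun j' _ => (Finset.sum_mul _ _ _).symm
      _ = ∑ j, ∑ j', (if j = j' then σ ^ 2 else 0) * (e j * e j') := by
          exact Finset.sum_congr rfl fun j _ => Finset.sum_congr rfl fun j' _ => by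
            rw [horth]
      _ = σ ^ 2 * ∑ j, e j ^ 2 := by
          rw [Finset.mul_sum]
          refine Finset.sum_congr rfl fun j _ => ?_
          simp [ite_mul, Finset.sum_ite_eq, sq]
  have hmain : ∑ i, ∑ j, (kacStep N p A b i v j - w j) ^ 2
      = (N : ℝ) * (∑ j, e j ^ 2) - (σ ^ 2 * ∑ j, e j ^ 2) / c := by
    have : ∀ i, ∑ j, (kacStep N p A b i v j - w j) ^ 2
        = (∑ j, e j ^ 2) - (t i) ^ 2 / c := by
      intro i
      rw [Finset.sum_congr rfl fun j _ => by rw [hstep i j]]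
      exact hsq i
    rw [Finset.sum_congr rfl fun i _ => this i, Finset.sum_sub_distrib,
      Finset.sum_const, ← Finset.sum_div, hts]
    simp [mul_comm]
  rw [hmain]
  have hE : ∑ j, e j ^ 2 = ∑ j, (v j - w j) ^ 2 := rfl
  rw [hE.symm, hc_def]
  field_simp

/-- If all singular values of `A` equal `σ > 0` (i.e. `AᵀA = σ² I`), its rows all have
equal norm, and `A w = b` is consistent, then randomized Kaczmarz with independent uniform
row indices satisfies `E‖w_n - w‖² ≤ (1 - 1/p)^n ‖w₀ - w‖²`; the expectation over the `n`
independent uniform indices is the average over all `N^n` index sequences. -/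
theorem stmt19 (N p : ℕ) (hp : 0 < p) (hN : 0 < N)
    (A : Matrix (Fin N) (Fin p) ℝ) (σ : ℝ) (hσ : 0 < σ)
    (hATA : A.transpose * A = (σ ^ 2) • (1 : Matrix (Fin p) (Fin p) ℝ))
    (hrow : ∀ i i' : Fin N, ∑ j, A i j ^ 2 = ∑ j, A i' j ^ 2)
    (w w₀ : Fin p → ℝ) (b : Fin N → ℝ) (hb : A.mulVec w = b) (n : ℕ) :
    (1 / (N : ℝ) ^ n) * ∑ seq : Fin n → Fin N,
        ∑ j, (kacIter N p n A b w₀ seq j - w j) ^ 2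
      ≤ (1 - 1 / (p : ℝ)) ^ n * ∑ j, (w₀ j - w j) ^ 2 := by
  have hpR : (0:ℝ) < p := by exact_mod_cast hp
  have hNR : (0:ℝ) < N := by exact_mod_cast hN
  have hfac : (0:ℝ) ≤ 1 - 1 / (p : ℝ) := by
    have : (1:ℝ) / p ≤ 1 := by
      rw [div_le_one hpR]; exact_mod_cast hp
    linarith
  induction n generalizing w₀ with
  | zero =>
    simp [kacIter]
  | succ n ih =>
    have hcons : ∀ (i : Fin N) (rest : Fin n → Fin N),
        kacIter N p (n+1) A b w₀ (Fin.cons i rest)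
          = kacIter N p n A b (kacStep N p A b i w₀) rest := by
      intro i rest
      simp [kacIter, List.ofFn_succ, Fin.cons_succ]
    have key : (∑ seq : Fin (n+1) → Fin N, ∑ j, (kacIter N p (n+1) A b w₀ seq j - w j) ^ 2)
        = ∑ i : Fin N, ∑ rest : Fin n → Fin N,
            ∑ j, (kacIter N p (n+1) A b w₀ (Fin.cons i rest) j - w j) ^ 2 := by
      rw [← Equiv.sum_comp (Fin.consEquiv (fun _ => Fin N))
        (fun seq => ∑ j, (kacIter N p (n+1) A b w₀ seq j - w j) ^ 2), Fintype.sum_prod_type]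
      rfl
    rw [key]
    have hrw : ∀ i : Fin N, ∑ rest : Fin n → Fin N,
        ∑ j, (kacIter N p (n+1) A b w₀ (Fin.cons i rest) j - w j) ^ 2
        = ∑ rest : Fin n → Fin N,
        ∑ j, (kacIter N p n A b (kacStep N p A b i w₀) rest j - w j) ^ 2 := by
      intro i
      exact Finset.sum_congr rfl fun rest _ => by rw [hcons i rest]
    rw [Finset.sum_congr rfl fun i _ => hrw i]
    have step1 : (1 / (N : ℝ) ^ (n+1)) * ∑ i : Fin N, ∑ rest : Fin n → Fin N,
        ∑ j, (kacIter N p n A b (kacStep N p A b i w₀) rest j - w j) ^ 2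
        = (1 / (N : ℝ)) * ∑ i : Fin N, (1 / (N : ℝ) ^ n) * ∑ rest : Fin n → Fin N,
        ∑ j, (kacIter N p n A b (kacStep N p A b i w₀) rest j - w j) ^ 2 := by
      rw [Finset.mul_sum, Finset.mul_sum]
      refine Finset.sum_congr rfl fun i _ => ?_
      rw [← mul_assoc]
      congr 1
      rw [pow_succ]
      field_simp
    rw [step1]
    have step2 : (1 / (N : ℝ)) * ∑ i : Fin N, (1 / (N : ℝ) ^ n) * ∑ rest : Fin n → Fin N,
        ∑ j, (kacIter N p n A b (kacStep N p A b i w₀) rest j - w j) ^ 2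
        ≤ (1 / (N : ℝ)) * ∑ i : Fin N, (1 - 1 / (p : ℝ)) ^ n *
            ∑ j, (kacStep N p A b i w₀ j - w j) ^ 2 := by
      refine mul_le_mul_of_nonneg_left ?_ (by positivity)
      exact Finset.sum_le_sum fun i _ => ih (kacStep N p A b i w₀)
    refine le_trans step2 ?_
    have step3 : ∑ i : Fin N, (1 - 1 / (p : ℝ)) ^ n *
        ∑ j, (kacStep N p A b i w₀ j - w j) ^ 2
        = (1 - 1 / (p : ℝ)) ^ n * ((N : ℝ) * ((1 - 1 / (p : ℝ)) *
            ∑ j, (w₀ j - w j) ^ 2)) := by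
      rw [← Finset.mul_sum, kac_step_sum N p hp hN A σ hσ hATA hrow w b hb w₀]
    rw [step3]
    apply le_of_eq
    have hN0 : (N : ℝ) ≠ 0 := ne_of_gt hNR
    set E := ∑ j, (w₀ j - w j) ^ 2 with hE
    rw [pow_succ]
    field_simp
end
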